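/- For every positive integer d, every v ∈ {0,1}^d with e_{d−1} ≺_rlex v (so that P(v) is full-dimensional in ℝ^d), and every i ∈ coSig(v): the inequality x_i + Σ_{j ∈ Sig_{>i}(v)} x_j ≤ |Sig_{>i}(v)| defines a facet of P(v) if and only if i > sig_{s(v)}(v) (i.e., i is greater than the minimum element of Sig(v)). -/

import Mathlib

open Finset

/-- The set of 0/1-vectors in ℝ^d. -/
def ZeroOne (d : ℕ) : Set (Fin d → ℝ) := {x | ∀ i, x i = 0 ∨ x i = 1}

/-- `x` is reverse-lexicographically smaller than `y`:
there is an index `m` with `x m < y m` and `x i = y i` for all `i > m`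
(equivalently, `x m < y m` for `m` the largest index where `x` and `y` differ). -/
def RlexLt {d : ℕ} (x y : Fin d → ℝ) : Prop :=
  ∃ m : Fin d, x m < y m ∧ ∀ i : Fin d, m < i → x i = y i

/-- `X(v)`: the 0/1-points revlex-smaller than `v`. -/
def Xset {d : ℕ} (v : Fin d → ℝ) : Set (Fin d → ℝ) :=
  {x | x ∈ ZeroOne d ∧ RlexLt x v}

/-- The revlex-initial 0/1-polytope `P(v) = conv X(v)`. -/
noncomputable def Pset {d : ℕ} (v : Fin d → ℝ) : Set (Fin d → ℝ) :=
  convexHull ℝ (Xset v)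

/-- `Sig(v)`: the support of `v` (the indices of its one-entries). -/
noncomputable def Sig {d : ℕ} (v : Fin d → ℝ) : Finset (Fin d) :=
  @Finset.filter (Fin d) (fun i => v i = 1) (Classical.decPred _) Finset.univ

/-- `Sig_{>i}(v)`: the elements of `Sig(v)` above `i`. -/
noncomputable def SigGt {d : ℕ} (v : Fin d → ℝ) (i : Fin d) : Finset (Fin d) :=
  (Sig v).filter (fun j => i < j)

/-- The dimension of the affine hull of a set in ℝ^d. -/
noncomputable def adim {d : ℕ} (s : Set (Fin d → ℝ)) : ℕ :=
  Module.finrank ℝ (affineSpan ℝ s).direction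

/-- A face of a polytope: a convex extreme subset. -/
def IsFaceOf {d : ℕ} (P F : Set (Fin d → ℝ)) : Prop :=
  Convex ℝ F ∧ IsExtreme ℝ P F

/-- The number of indices satisfying a predicate. -/
noncomputable def cnt {d : ℕ} (p : Fin d → Prop) : ℕ :=
  (@Finset.filter (Fin d) p (Classical.decPred _) Finset.univ).card

namespace Stmt6Aux
variable {d : ℕ}
noncomputable def ind (A : Finset (Fin d)) : Fin d → ℝ := fun t => if t ∈ A then 1 else 0
lemma ind_mem_zeroOne (A : Finset (Fin d)) : ind A ∈ ZeroOne d := by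
  intro t; by_cases h : t ∈ A <;> simp [ind, h]
lemma mem_Sig_iff {v : Fin d → ℝ} {j : Fin d} : j ∈ Sig v ↔ v j = 1 := by simp [Sig]
lemma mem_SigGt_iff {v : Fin d → ℝ} {i j : Fin d} : j ∈ SigGt v i ↔ v j = 1 ∧ i < j := by
  simp [SigGt, mem_Sig_iff, Finset.mem_filter]
lemma ind_mem_X {v : Fin d → ℝ} (hv : v ∈ ZeroOne d) {A : Finset (Fin d)} {m : Fin d}
    (hm : v m = 1) (hmA : m ∉ A) (habove : ∀ j, m < j → (j ∈ A ↔ v j = 1)) :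
    ind A ∈ Xset v := by
  refine ⟨ind_mem_zeroOne A, m, ?_, ?_⟩
  · simp [ind, hmA, hm]
  · intro j hj
    by_cases hA : j ∈ A
    · simp [ind, hA, ((habove j hj).mp hA).symm]
    · have h0 : v j = 0 := by
        rcases hv j with h | h
        · exact h
        · exact absurd ((habove j hj).mpr h) hA
      simp [ind, hA, h0]
lemma sum_ind (S A : Finset (Fin d)) : ∑ j ∈ S, ind A j = ((S ∩ A).card : ℝ) := by
  simp [ind, Finset.sum_boole, Finset.filter_mem_eq_inter]
lemma ind_sub_ind_erase {A : Finset (Fin d)} {x : Fin d} (hx : x ∈ A) :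
    ind A - ind (A.erase x) = Pi.single x 1 := by
  funext t
  by_cases h : t = x
  · subst h; simp [ind, hx]
  · by_cases htA : t ∈ A <;> simp [ind, Finset.mem_erase, h, htA, Pi.single_apply]
lemma ind_erase_sub_erase {B : Finset (Fin d)} {x y : Fin d} (hx : x ∈ B) (hy : y ∈ B)
    (hxy : x ≠ y) : ind (B.erase y) - ind (B.erase x) = Pi.single x 1 - Pi.single y 1 := by
  funext t
  rcases eq_or_ne t x with rfl | htx
  · simp [ind, Finset.mem_erase, hx, hxy, Pi.single_apply, hxy.symm]
  · rcases eq_or_ne t y with rfl | hty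
    · simp [ind, Finset.mem_erase, hy, hxy.symm, Pi.single_apply, htx]
    · by_cases htB : t ∈ B <;> simp [ind, Finset.mem_erase, htx, hty, htB, Pi.single_apply]
lemma vectorSpan_le_ker {M : Type*} [AddCommGroup M] [Module ℝ M] {s : Set (Fin d → ℝ)}
    (f : (Fin d → ℝ) →ₗ[ℝ] M) (c : M) (h : ∀ x ∈ s, f x = c) :
    vectorSpan ℝ s ≤ LinearMap.ker f := by
  rw [vectorSpan_def]
  refine Submodule.span_le.mpr ?_
  rintro z hz
  rw [Set.mem_vsub] at hz
  obtain ⟨x, hx, y, hy, rfl⟩ := hz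
  simp [LinearMap.mem_ker, vsub_eq_sub, map_sub, h x hx, h y hy]
lemma eq_top_of_singles {p : Submodule ℝ (Fin d → ℝ)}
    (h : ∀ t : Fin d, (Pi.single t 1 : Fin d → ℝ) ∈ p) : p = ⊤ := by
  rw [eq_top_iff]; intro x _
  have hx : x = ∑ t : Fin d, x t • (Pi.single t 1 : Fin d → ℝ) := by
    funext s; simp [Finset.sum_apply, Pi.single_apply]
  rw [hx]; exact Submodule.sum_mem _ fun t _ => Submodule.smul_mem _ _ (h t)
lemma adim_eq_finrank_vectorSpan (s : Set (Fin d → ℝ)) :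
    adim s = Module.finrank ℝ (vectorSpan ℝ s) := by
  rw [adim, direction_affineSpan]
lemma sum_single_of_mem {T : Finset (Fin d)} {x : Fin d} (hx : x ∈ T) :
    ∑ j ∈ T, Pi.single x (1:ℝ) j = 1 := by
  rw [Finset.sum_eq_single_of_mem x hx (fun b _ hb => Pi.single_eq_of_ne hb 1)]
  simp
noncomputable def fIneq (i : Fin d) (S : Finset (Fin d)) : (Fin d → ℝ) →ₗ[ℝ] ℝ :=
  (LinearMap.proj (R := ℝ) (φ := fun _ : Fin d => ℝ) i) +
    ∑ j ∈ S, LinearMap.proj (R := ℝ) (φ := fun _ : Fin d => ℝ) j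
lemma fIneq_apply (i : Fin d) (S : Finset (Fin d)) (x : Fin d → ℝ) :
    fIneq i S x = x i + ∑ j ∈ S, x j := by
  simp [fIneq, LinearMap.sum_apply]

lemma case_A {v : Fin d → ℝ} (hv : v ∈ ZeroOne d) {i L k : Fin d}
    (hi : i ∉ Sig v) (hL_top : ∀ j : Fin d, j ≤ L) (hvL : v L = 1) (hilt : i < L)
    (hkS : k ∈ Sig v) (hki : k < i) :
    adim {x ∈ Pset v | x i + ∑ j ∈ SigGt v i, x j = ((SigGt v i).card : ℝ)} = d - 1 := by
  classical
  set S := SigGt v i with hS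
  set c := S.card with hc
  set face := {x ∈ Pset v | x i + ∑ j ∈ S, x j = (c : ℝ)} with hface
  have hiS : i ∉ S := fun h => absurd (mem_SigGt_iff.mp h).2 (lt_irrefl i)
  have hLS : L ∈ S := mem_SigGt_iff.mpr ⟨hvL, hilt⟩
  have hiL : i ≠ L := ne_of_lt hilt
  have hc1 : 1 ≤ c := Finset.card_pos.mpr ⟨L, hLS⟩
  have hvac : ∀ (A : Finset (Fin d)), ∀ j, L < j → (j ∈ A ↔ v j = 1) := fun A j hj =>
    absurd (hL_top j) (not_le.mpr hj)
  -- upper bound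
  have hker : vectorSpan ℝ face ≤ LinearMap.ker (fIneq i S) :=
    vectorSpan_le_ker _ (c : ℝ) (fun x hx => by rw [fIneq_apply]; exact hx.2)
  have hfne : fIneq i S (Pi.single L 1) = 1 := by
    rw [fIneq_apply, Pi.single_eq_of_ne hiL 1, sum_single_of_mem hLS]
    norm_num
  have hrange1 : 1 ≤ Module.finrank ℝ (LinearMap.range (fIneq i S)) := by
    rw [Nat.one_le_iff_ne_zero]
    intro h0
    rw [Submodule.finrank_eq_zero] at h0
    have hm : fIneq i S (Pi.single L 1) ∈ LinearMap.range (fIneq i S) := ⟨_, rfl⟩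
    rw [h0] at hm
    rw [hfne] at hm
    simpa using hm
  have hkerle : Module.finrank ℝ (LinearMap.ker (fIneq i S)) ≤ d - 1 := by
    have h := LinearMap.finrank_range_add_finrank_ker (fIneq i S)
    rw [Module.finrank_fintype_fun_eq_card, Fintype.card_fin] at h
    omega
  have hupper : adim face ≤ d - 1 := by
    rw [adim_eq_finrank_vectorSpan]
    exact le_trans (Submodule.finrank_mono hker) hkerle
  -- helper for face membership with i in the support
  have hfaceX : ∀ (A : Finset (Fin d)), ind A ∈ Xset v → i ∈ A →
      ∀ e ∈ S, S ∩ A = S.erase e → ind A ∈ face := by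
    intro A hA hiA e he hinter
    refine ⟨subset_convexHull ℝ _ hA, ?_⟩
    have h1 : ind A i = 1 := by simp [ind, hiA]
    rw [h1, sum_ind, hinter, Finset.card_erase_of_mem he, Nat.cast_sub hc1]
    norm_num
  -- point a
  have haX : ind ((Sig v).erase k) ∈ Xset v := by
    refine ind_mem_X hv (mem_Sig_iff.mp hkS) (Finset.notMem_erase _ _) ?_
    intro j hj
    rw [Finset.mem_erase, mem_Sig_iff]
    exact ⟨fun h => h.2, fun h => ⟨ne_of_gt hj, h⟩⟩
  have haF : ind ((Sig v).erase k) ∈ face := by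
    refine ⟨subset_convexHull ℝ _ haX, ?_⟩
    have h1 : ind ((Sig v).erase k) i = 0 := by
      simp [ind, Finset.mem_erase, hi]
    have hinter : S ∩ (Sig v).erase k = S := by
      refine Finset.inter_eq_left.mpr ?_
      intro j hj
      rcases mem_SigGt_iff.mp hj with ⟨hj1, hj2⟩
      exact Finset.mem_erase.mpr ⟨ne_of_gt (lt_trans hki hj2), mem_Sig_iff.mpr hj1⟩
    rw [h1, sum_ind, hinter]
    ring
  -- point q0
  have hq0X : ind (insert i (((Sig v).erase k).erase L)) ∈ Xset v := by
    refine ind_mem_X hv hvL ?_ (hvac _)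
    simp [Finset.mem_insert, Ne.symm hiL]
  have hq0F : ind (insert i (((Sig v).erase k).erase L)) ∈ face := by
    refine hfaceX _ hq0X (Finset.mem_insert_self i _) L hLS ?_
    ext j
    simp only [Finset.mem_inter, Finset.mem_insert, Finset.mem_erase]
    constructor
    · rintro ⟨hjS, rfl | ⟨hjL, hjk, _⟩⟩
      · exact absurd hjS hiS
      · exact ⟨hjL, hjS⟩
    · rintro ⟨hjL, hjS⟩
      rcases mem_SigGt_iff.mp hjS with ⟨h1, h2⟩
      exact ⟨hjS, Or.inr ⟨hjL, ne_of_gt (lt_trans hki h2), mem_Sig_iff.mpr h1⟩⟩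
  -- points bm
  have hbmX : ∀ m ∈ S, ind ((insert i S).erase m) ∈ Xset v := by
    intro m hm
    rcases mem_SigGt_iff.mp hm with ⟨hvm, him⟩
    refine ind_mem_X hv hvm (Finset.notMem_erase _ _) ?_
    intro j hj
    rw [Finset.mem_erase, Finset.mem_insert]
    constructor
    · rintro ⟨hjm, hji | hjS⟩
      · exfalso; rw [hji] at hj; exact lt_irrefl i (lt_trans him hj)
      · exact (mem_SigGt_iff.mp hjS).1
    · intro hvj
      exact ⟨ne_of_gt hj, Or.inr (mem_SigGt_iff.mpr ⟨hvj, lt_trans him hj⟩)⟩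
  have hbmF : ∀ m ∈ S, ind ((insert i S).erase m) ∈ face := by
    intro m hm
    refine hfaceX _ (hbmX m hm) ?_ m hm ?_
    · exact Finset.mem_erase.mpr ⟨fun h => hiS (by rw [h]; exact hm), Finset.mem_insert_self i S⟩
    · ext j
      simp only [Finset.mem_inter, Finset.mem_erase, Finset.mem_insert]
      constructor
      · rintro ⟨hjS, hjm, _⟩; exact ⟨hjm, hjS⟩
      · rintro ⟨hjm, hjS⟩; exact ⟨hjS, hjm, Or.inr hjS⟩
  -- points pt
  have hptF : ∀ t, t ∉ S → t ≠ i → t ≠ L → ind (insert t ((insert i S).erase L)) ∈ face := by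
    intro t htS hti htL
    have hX : ind (insert t ((insert i S).erase L)) ∈ Xset v := by
      refine ind_mem_X hv hvL ?_ (hvac _)
      simp [Finset.mem_insert, Finset.mem_erase, Ne.symm htL]
    refine hfaceX _ hX ?_ L hLS ?_
    · exact Finset.mem_insert_of_mem (Finset.mem_erase.mpr ⟨hiL, Finset.mem_insert_self i S⟩)
    · ext j
      simp only [Finset.mem_inter, Finset.mem_insert, Finset.mem_erase]
      constructor
      · rintro ⟨hjS, rfl | ⟨hjL, _⟩⟩
        · exact absurd hjS htS
        · exact ⟨hjL, hjS⟩
      · rintro ⟨hjL, hjS⟩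
        exact ⟨hjS, Or.inr ⟨hjL, Or.inr hjS⟩⟩
  -- a - q0 computation
  have haq : ind ((Sig v).erase k) - ind (insert i (((Sig v).erase k).erase L))
      = Pi.single L 1 - Pi.single i 1 := by
    funext t
    rcases eq_or_ne t i with rfl | hti
    · simp [ind, Finset.mem_erase, hi, Pi.single_apply, hiL]
    · rcases eq_or_ne t L with rfl | htL
      · have hLA1 : t ∈ (Sig v).erase k :=
          Finset.mem_erase.mpr ⟨ne_of_gt (lt_trans hki hilt), mem_Sig_iff.mpr hvL⟩
        simp [ind, hLA1, Finset.mem_insert, Finset.mem_erase, Ne.symm hiL, Pi.single_apply, hti]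
      · have hiff : t ∈ insert i (((Sig v).erase k).erase L) ↔ t ∈ (Sig v).erase k := by
          simp [Finset.mem_insert, Finset.mem_erase, hti, htL]
        by_cases htA : t ∈ (Sig v).erase k <;>
          simp [ind, hiff, htA, Pi.single_apply, hti, htL]
  -- the sup is everything
  have hMtop : vectorSpan ℝ face ⊔ Submodule.span ℝ {(Pi.single L 1 : Fin d → ℝ)} = ⊤ := by
    apply eq_top_of_singles
    intro t
    rcases eq_or_ne t L with rfl | htL
    · exact Submodule.mem_sup_right (Submodule.mem_span_singleton_self _)
    · rcases eq_or_ne t i with rfl | hti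
      · have hmem : ind ((Sig v).erase k) - ind (insert t (((Sig v).erase k).erase L))
            ∈ vectorSpan ℝ face := vsub_mem_vectorSpan ℝ haF hq0F
        have heq : (Pi.single t 1 : Fin d → ℝ)
            = Pi.single L 1 - (ind ((Sig v).erase k) - ind (insert t (((Sig v).erase k).erase L))) := by
          rw [haq]; abel
        rw [heq]
        exact Submodule.sub_mem _
          (Submodule.mem_sup_right (Submodule.mem_span_singleton_self _))
          (Submodule.mem_sup_left hmem)
      · by_cases htS : t ∈ S
        · have hmem : ind ((insert i S).erase L) - ind ((insert i S).erase t)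
              ∈ vectorSpan ℝ face := vsub_mem_vectorSpan ℝ (hbmF L hLS) (hbmF t htS)
          have hdiff : ind ((insert i S).erase L) - ind ((insert i S).erase t)
              = Pi.single t 1 - Pi.single L 1 :=
            ind_erase_sub_erase (Finset.mem_insert_of_mem htS)
              (Finset.mem_insert_of_mem hLS) htL
          have heq : (Pi.single t 1 : Fin d → ℝ)
              = (ind ((insert i S).erase L) - ind ((insert i S).erase t)) + Pi.single L 1 := by
            rw [hdiff]; abel
          rw [heq]
          exact Submodule.add_mem _ (Submodule.mem_sup_left hmem)
            (Submodule.mem_sup_right (Submodule.mem_span_singleton_self _))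
        · have hmem : ind (insert t ((insert i S).erase L)) - ind ((insert i S).erase L)
              ∈ vectorSpan ℝ face := vsub_mem_vectorSpan ℝ (hptF t htS hti htL) (hbmF L hLS)
          have htC : t ∉ (insert i S).erase L := by
            simp [Finset.mem_erase, Finset.mem_insert, hti, htS]
          have hdiff : ind (insert t ((insert i S).erase L)) - ind ((insert i S).erase L)
              = Pi.single t 1 := by
            have h1 := ind_sub_ind_erase (Finset.mem_insert_self t ((insert i S).erase L))
            rwa [Finset.erase_insert htC] at h1
          rw [← hdiff]
          exact Submodule.mem_sup_left hmem
  -- conclude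
  have hsingle_ne : (Pi.single L 1 : Fin d → ℝ) ≠ 0 := by
    intro h0
    have := congrFun h0 L
    simp [Pi.single_eq_same] at this
  have hsp1 : Module.finrank ℝ (Submodule.span ℝ {(Pi.single L 1 : Fin d → ℝ)}) = 1 :=
    finrank_span_singleton hsingle_ne
  have hfr : d ≤ Module.finrank ℝ (vectorSpan ℝ face) + 1 := by
    have h := Submodule.finrank_sup_add_finrank_inf_eq (vectorSpan ℝ face)
      (Submodule.span ℝ {(Pi.single L 1 : Fin d → ℝ)})
    rw [hMtop, finrank_top, Module.finrank_fintype_fun_eq_card, Fintype.card_fin, hsp1] at h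
    omega
  have hlower : d - 1 ≤ adim face := by
    rw [adim_eq_finrank_vectorSpan]
    omega
  omega
lemma sum_single_of_not_mem {T : Finset (Fin d)} {x : Fin d} (hx : x ∉ T) :
    ∑ j ∈ T, Pi.single x (1:ℝ) j = 0 :=
  Finset.sum_eq_zero fun b hb => Pi.single_eq_of_ne (by rintro rfl; exact hx hb) 1

lemma v_eq_zero {v : Fin d → ℝ} (hv : v ∈ ZeroOne d) {j : Fin d} (hj : j ∉ Sig v) : v j = 0 := by
  rcases hv j with h | h
  · exact h
  · exact absurd (mem_Sig_iff.mpr h) hj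

lemma sum_hull {s : Set (Fin d → ℝ)} (T : Finset (Fin d)) (r : ℝ)
    (h : ∀ x ∈ s, ∑ j ∈ T, x j ≤ r) : ∀ x ∈ convexHull ℝ s, ∑ j ∈ T, x j ≤ r := by
  have hlin : IsLinearMap ℝ (fun x : Fin d → ℝ => ∑ j ∈ T, x j) :=
    ⟨fun a b => by simp [Finset.sum_add_distrib], fun r a => by simp [Finset.mul_sum]⟩
  exact fun x hx => convexHull_min h (convex_halfSpace_le hlin r) hx

lemma witness_facts {v x : Fin d → ℝ} (hv : v ∈ ZeroOne d) (hx : x ∈ ZeroOne d)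
    {m : Fin d} (hm : x m < v m) : x m = 0 ∧ v m = 1 := by
  rcases hv m with h | h <;> rcases hx m with h' | h' <;>
    constructor <;> first | assumption | linarith [hm]

lemma valid_X {v : Fin d → ℝ} (hv : v ∈ ZeroOne d) {i : Fin d} (hi : i ∉ Sig v) :
    ∀ x ∈ Xset v, x i + ∑ j ∈ SigGt v i, x j ≤ ((SigGt v i).card : ℝ) := by
  rintro x ⟨hx01, m, hm, hab⟩
  obtain ⟨hxm, hvm⟩ := witness_facts hv hx01 hm
  have hle1 : ∀ j, x j ≤ 1 := fun j => by rcases hx01 j with h | h <;> simp [h]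
  have hmi : m ≠ i := fun h => hi (by rw [← h] at *; exact mem_Sig_iff.mpr hvm)
  rcases lt_or_gt_of_ne hmi with hlt | hgt
  · have hxi : x i = 0 := by rw [hab i hlt]; exact v_eq_zero hv hi
    have : ∑ j ∈ SigGt v i, x j ≤ ((SigGt v i).card : ℝ) := by
      calc ∑ j ∈ SigGt v i, x j ≤ ∑ j ∈ SigGt v i, (1:ℝ) :=
            Finset.sum_le_sum fun j _ => hle1 j
        _ = ((SigGt v i).card : ℝ) := by simp
    linarith
  · have hmS : m ∈ SigGt v i := mem_SigGt_iff.mpr ⟨hvm, hgt⟩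
    have hsum : ∑ j ∈ SigGt v i, x j ≤ ((SigGt v i).card : ℝ) - 1 := by
      have h1 : ∑ j ∈ SigGt v i, x j = x m + ∑ j ∈ (SigGt v i).erase m, x j :=
        (Finset.add_sum_erase _ _ hmS).symm
      have h2 : ∑ j ∈ (SigGt v i).erase m, x j ≤ (((SigGt v i).erase m).card : ℝ) := by
        calc ∑ j ∈ (SigGt v i).erase m, x j ≤ ∑ j ∈ (SigGt v i).erase m, (1:ℝ) :=
              Finset.sum_le_sum fun j _ => hle1 j
          _ = _ := by simp
      have h3 : (((SigGt v i).erase m).card : ℝ) = ((SigGt v i).card : ℝ) - 1 := by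
        rw [Finset.card_erase_of_mem hmS]
        have : 1 ≤ (SigGt v i).card := Finset.card_pos.mpr ⟨m, hmS⟩
        push_cast [this]
        ring
      rw [h1, hxm]
      linarith
    linarith [hle1 i]

lemma valid_X_sum {v : Fin d → ℝ} (hv : v ∈ ZeroOne d) {i : Fin d}
    (hmin : ∀ j ∈ Sig v, i < j) :
    ∀ x ∈ Xset v, ∑ j ∈ SigGt v i, x j ≤ ((SigGt v i).card : ℝ) - 1 := by
  rintro x ⟨hx01, m, hm, hab⟩
  obtain ⟨hxm, hvm⟩ := witness_facts hv hx01 hm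
  have hle1 : ∀ j, x j ≤ 1 := fun j => by rcases hx01 j with h | h <;> simp [h]
  have hmS : m ∈ SigGt v i := mem_SigGt_iff.mpr ⟨hvm, hmin m (mem_Sig_iff.mpr hvm)⟩
  have h1 : ∑ j ∈ SigGt v i, x j = x m + ∑ j ∈ (SigGt v i).erase m, x j :=
    (Finset.add_sum_erase _ _ hmS).symm
  have h2 : ∑ j ∈ (SigGt v i).erase m, x j ≤ (((SigGt v i).erase m).card : ℝ) := by
    calc ∑ j ∈ (SigGt v i).erase m, x j ≤ ∑ j ∈ (SigGt v i).erase m, (1:ℝ) :=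
          Finset.sum_le_sum fun j _ => hle1 j
      _ = _ := by simp
  have h3 : (((SigGt v i).erase m).card : ℝ) = ((SigGt v i).card : ℝ) - 1 := by
    rw [Finset.card_erase_of_mem hmS]
    have : 1 ≤ (SigGt v i).card := Finset.card_pos.mpr ⟨m, hmS⟩
    push_cast [this]
    ring
  rw [h1, hxm]
  linarith

lemma vectorSpan_X_top {v : Fin d → ℝ} (hv : v ∈ ZeroOne d) {last m0 : Fin d}
    (hm0lt : m0 < last) (hlast_top : ∀ j : Fin d, j ≤ last)
    (hvlast : v last = 1) (hvm0 : v m0 = 1) :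
    vectorSpan ℝ (Xset v) = ⊤ := by
  have hvac : ∀ (A : Finset (Fin d)), ∀ j, last < j → (j ∈ A ↔ v j = 1) := by
    intro A j hj
    exact absurd (hlast_top j) (not_le.mpr hj)
  have hemp : ind (∅ : Finset (Fin d)) ∈ Xset v :=
    ind_mem_X hv hvlast (Finset.notMem_empty last) (hvac ∅)
  apply eq_top_of_singles
  intro t
  rcases eq_or_ne t last with h | htlast
  · rw [h]
    have hlastSig : last ∈ (Sig v).erase m0 :=
      Finset.mem_erase.mpr ⟨(ne_of_lt hm0lt).symm, mem_Sig_iff.mpr hvlast⟩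
    have hy : ind ((Sig v).erase m0) ∈ Xset v := by
      refine ind_mem_X hv hvm0 (Finset.notMem_erase _ _) ?_
      intro j hj
      rw [Finset.mem_erase, mem_Sig_iff]
      exact ⟨fun h => h.2, fun h => ⟨(ne_of_lt hj).symm, h⟩⟩
    have hy' : ind (((Sig v).erase m0).erase last) ∈ Xset v :=
      ind_mem_X hv hvlast (Finset.notMem_erase _ _) (hvac _)
    have := ind_sub_ind_erase hlastSig
    rw [← this]
    exact vsub_mem_vectorSpan ℝ hy hy'
  · have ht : ind {t} ∈ Xset v := by
      refine ind_mem_X hv hvlast ?_ (hvac _)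
      simp [htlast.symm]
    have herase : ({t} : Finset (Fin d)).erase t = ∅ := by simp
    have := ind_sub_ind_erase (Finset.mem_singleton_self t)
    rw [herase] at this
    rw [← this]
    exact vsub_mem_vectorSpan ℝ ht hemp

lemma adim_P_eq {v : Fin d → ℝ} (hv : v ∈ ZeroOne d) {last m0 : Fin d}
    (hm0lt : m0 < last) (hlast_top : ∀ j : Fin d, j ≤ last)
    (hvlast : v last = 1) (hvm0 : v m0 = 1) :
    adim (Pset v) = d := by
  rw [adim, Pset, affineSpan_convexHull, direction_affineSpan,
    vectorSpan_X_top hv hm0lt hlast_top hvlast hvm0, finrank_top,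
    Module.finrank_fintype_fun_eq_card, Fintype.card_fin]

lemma valid_P {v : Fin d → ℝ} (hv : v ∈ ZeroOne d) {i : Fin d} (hi : i ∉ Sig v) :
    ∀ x ∈ Pset v, x i + ∑ j ∈ SigGt v i, x j ≤ ((SigGt v i).card : ℝ) := by
  have hiS : i ∉ SigGt v i := fun h => absurd (mem_SigGt_iff.mp h).2 (lt_irrefl i)
  have hins : ∀ x : Fin d → ℝ, ∑ j ∈ insert i (SigGt v i), x j = x i + ∑ j ∈ SigGt v i, x j :=
    fun x => Finset.sum_insert hiS
  intro x hx
  rw [← hins]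
  exact sum_hull _ _ (fun y hy => by rw [hins]; exact valid_X hv hi y hy) x hx

lemma case_B {v : Fin d → ℝ} (hv : v ∈ ZeroOne d) {i L : Fin d}
    (hi : i ∉ Sig v) (hvL : v L = 1) (hilt : i < L)
    (hmin : ∀ j ∈ Sig v, i < j) :
    adim {x ∈ Pset v | x i + ∑ j ∈ SigGt v i, x j = ((SigGt v i).card : ℝ)} ≤ d - 2 := by
  classical
  set S := SigGt v i with hS
  set c := S.card with hc
  set face := {x ∈ Pset v | x i + ∑ j ∈ S, x j = (c : ℝ)} with hface
  have hiS : i ∉ S := fun h => absurd (mem_SigGt_iff.mp h).2 (lt_irrefl i)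
  have hLS : L ∈ S := mem_SigGt_iff.mpr ⟨hvL, hilt⟩
  have hiL : i ≠ L := ne_of_lt hilt
  have hxi_le : ∀ x ∈ Pset v, x i ≤ 1 := by
    have h : ∀ y ∈ Xset v, ∑ j ∈ {i}, y j ≤ 1 := by
      rintro y ⟨hy01, -⟩
      rw [Finset.sum_singleton]
      rcases hy01 i with h | h <;> simp [h]
    intro x hx
    have := sum_hull {i} 1 h x hx
    rwa [Finset.sum_singleton] at this
  have hsum_le : ∀ x ∈ Pset v, ∑ j ∈ S, x j ≤ (c : ℝ) - 1 :=
    fun x hx => sum_hull S ((c : ℝ) - 1) (valid_X_sum hv hmin) x hx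
  set F : (Fin d → ℝ) →ₗ[ℝ] ℝ × ℝ :=
    LinearMap.prod (LinearMap.proj (R := ℝ) (φ := fun _ : Fin d => ℝ) i)
      (∑ j ∈ S, LinearMap.proj (R := ℝ) (φ := fun _ : Fin d => ℝ) j) with hF
  have hFapp : ∀ x : Fin d → ℝ, F x = (x i, ∑ j ∈ S, x j) := by
    intro x
    simp [hF, LinearMap.sum_apply]
  have hconst : ∀ x ∈ face, F x = (1, (c : ℝ) - 1) := by
    rintro x ⟨hxP, hxeq⟩
    have h1 := hxi_le x hxP
    have h2 := hsum_le x hxP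
    have hxi : x i = 1 := by linarith
    have hxs : ∑ j ∈ S, x j = (c : ℝ) - 1 := by linarith
    rw [hFapp, hxi, hxs]
  have hker := vectorSpan_le_ker F _ hconst
  have hsurj : Function.Surjective F := by
    rintro ⟨p, r⟩
    refine ⟨fun t => p * (Pi.single i 1 : Fin d → ℝ) t + r * (Pi.single L 1 : Fin d → ℝ) t, ?_⟩
    rw [hFapp]
    simp only [Prod.mk.injEq]
    constructor
    · show p * (Pi.single i 1 : Fin d → ℝ) i + r * (Pi.single L 1 : Fin d → ℝ) i = p
      rw [Pi.single_eq_same, Pi.single_eq_of_ne hiL]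
      ring
    · show ∑ j ∈ S, (p * (Pi.single i 1 : Fin d → ℝ) j + r * (Pi.single L 1 : Fin d → ℝ) j) = r
      rw [Finset.sum_add_distrib, ← Finset.mul_sum, ← Finset.mul_sum,
        sum_single_of_mem hLS, sum_single_of_not_mem hiS]
      ring
  have hrange2 : Module.finrank ℝ (LinearMap.range F) = 2 := by
    rw [LinearMap.range_eq_top.mpr hsurj, finrank_top]
    simp
  have hkerle : Module.finrank ℝ (LinearMap.ker F) ≤ d - 2 := by
    have h := LinearMap.finrank_range_add_finrank_ker F
    rw [Module.finrank_fintype_fun_eq_card, Fintype.card_fin, hrange2] at h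
    omega
  rw [adim_eq_finrank_vectorSpan]
  exact le_trans (Submodule.finrank_mono hker) hkerle

end Stmt6Aux

/-- for full-dimensional `P(v)` and `i ∈ coSig(v)`, the inequality
`x_i + Σ_{j ∈ Sig_{>i}(v)} x_j ≤ |Sig_{>i}(v)|` defines a facet of `P(v)` iff
`i > sig_{s(v)}(v)`, i.e., `i` exceeds the minimum element of `Sig(v)`. -/
theorem stmt6 (d : ℕ) (hd : 0 < d) (v : Fin d → ℝ) (hv : v ∈ ZeroOne d)
    (hfull : RlexLt (Pi.single (⟨d - 1, by omega⟩ : Fin d) (1 : ℝ)) v)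
    (w : ℕ) (hw : w = (Sig v).card)
    (sig : ℕ → Fin d)
    (hanti : StrictAntiOn sig (Set.Icc 1 w))
    (himg : ∀ j : Fin d, j ∈ Sig v ↔ ∃ q, 1 ≤ q ∧ q ≤ w ∧ sig q = j)
    (i : Fin d) (hi : i ∉ Sig v) :
    ((∀ x ∈ Pset v, x i + ∑ j ∈ SigGt v i, x j ≤ ((SigGt v i).card : ℝ)) ∧
      adim {x ∈ Pset v | x i + ∑ j ∈ SigGt v i, x j = ((SigGt v i).card : ℝ)}
        = adim (Pset v) - 1)
    ↔ sig w < i := by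
  classical
  have hLlt : d - 1 < d := by omega
  set L : Fin d := ⟨d - 1, hLlt⟩ with hLdef
  have hfull' : RlexLt (Pi.single L (1:ℝ)) v := hfull
  obtain ⟨m0, hm0, hm0ab⟩ := hfull'
  clear_value L
  have hm0ne : m0 ≠ L := by
    intro h
    rw [h, Pi.single_eq_same] at hm0
    rcases hv L with h' | h' <;> rw [h'] at hm0 <;> linarith
  have hvm0 : v m0 = 1 := by
    have h0 : (Pi.single L 1 : Fin d → ℝ) m0 = 0 := Pi.single_eq_of_ne hm0ne 1
    rw [h0] at hm0
    rcases hv m0 with h' | h'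
    · linarith
    · exact h'
  have hm0lt : m0 < L := by
    have h1 : (m0 : ℕ) < d := m0.isLt
    have hLval : (L : ℕ) = d - 1 := by rw [hLdef]
    have h2 : (m0 : ℕ) ≠ d - 1 := fun hh => hm0ne (Fin.ext (by rw [hLval]; exact hh))
    rw [Fin.lt_def, hLval]
    omega
  have hL_top : ∀ j : Fin d, j ≤ L := by
    intro j
    rw [Fin.le_def]
    have := j.isLt
    simp only [hLdef]
    omega
  have hvL : v L = 1 := by
    have h := hm0ab L hm0lt
    rw [← h, Pi.single_eq_same]
  have hLS : L ∈ Sig v := Stmt6Aux.mem_Sig_iff.mpr hvL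
  have hiL : i ≠ L := fun h => hi (h ▸ hLS)
  have hilt : i < L := lt_of_le_of_ne (hL_top i) hiL
  have hw1 : 1 ≤ w := by
    rw [hw]
    exact Finset.card_pos.mpr ⟨L, hLS⟩
  have hkS : sig w ∈ Sig v := (himg _).mpr ⟨w, hw1, le_rfl, rfl⟩
  have hkmin : ∀ j ∈ Sig v, sig w ≤ j := by
    intro j hj
    obtain ⟨q, hq1, hqw, rfl⟩ := (himg j).mp hj
    rcases eq_or_lt_of_le hqw with rfl | hlt
    · exact le_rfl
    · exact le_of_lt (hanti ⟨hq1, hqw⟩ ⟨hw1, le_rfl⟩ hlt)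
  have hadimP : adim (Pset v) = d := Stmt6Aux.adim_P_eq hv hm0lt hL_top hvL hvm0
  have hineq : i ≠ sig w := fun h => hi (h ▸ hkS)
  rcases lt_or_gt_of_ne hineq with hlt | hgt
  · refine iff_of_false ?_ (lt_asymm hlt)
    rintro ⟨-, hdim⟩
    have hmin : ∀ j ∈ Sig v, i < j := fun j hj => lt_of_lt_of_le hlt (hkmin j hj)
    have hle := Stmt6Aux.case_B hv hi hvL hilt hmin
    rw [hadimP] at hdim
    rw [hdim] at hle
    clear hdim
    have hd2 : 2 ≤ d := by
      have h3 := hm0lt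
      rw [Fin.lt_def] at h3
      have hLval : (L : ℕ) = d - 1 := by rw [hLdef]
      rw [hLval] at h3
      omega
    omega
  · refine iff_of_true ⟨?_, ?_⟩ hgt
    · exact Stmt6Aux.valid_P hv hi
    · rw [Stmt6Aux.case_A hv hi hL_top hvL hilt hkS hgt, hadimP]
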